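/- Let τ, ω ∈ ℍ, z ∈ ℂ, and m, ℓ ∈ ℤ. Then T̂(z + 2mτ + ℓ; τ, ω) = e^{−2πimz}·q^{−m²}·T̂(z; τ, ω), where q := e^{2πiτ}. -/
import Mathlib


open Complex

noncomputable section

/-- The false theta function `T(z;τ) = Σ_{n∈ℤ} sgn(n+1/2) e^{2πinz} q^{n²}`, `q = e^{2πiτ}`. -/
def TFn (z τ : ℂ) : ℂ :=
  ∑' n : ℤ, ((if (0:ℤ) ≤ n then (1:ℂ) else -1)) *
    Complex.exp (2 * Real.pi * I * n * z) * Complex.exp (2 * Real.pi * I * τ * (n : ℂ) ^ 2)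

/-- The false theta function `ψ(z;τ) = Σ_{n∈ℤ+1/2} sgn(n) e^{2πin(z+1/2)} q^{n²/2}`,
written with `n = k + 1/2`, `k ∈ ℤ`, and `q^{n²/2} = e^{πiτn²}`. -/
def psiFn (z τ : ℂ) : ℂ :=
  ∑' k : ℤ, ((if (0:ℤ) ≤ k then (1:ℂ) else -1)) *
    Complex.exp (2 * Real.pi * I * ((k : ℂ) + 1 / 2) * (z + 1 / 2)) *
      Complex.exp (Real.pi * I * τ * ((k : ℂ) + 1 / 2) ^ 2)

/-- The entire extension of `E(x) = 2∫₀ˣ e^{−πt²}dt` to `ℂ`, via its power series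
`E(z) = 2 Σ_{n≥0} (−π)^n z^{2n+1} / (n!(2n+1))`. -/
def Ecplx (z : ℂ) : ℂ :=
  2 * ∑' n : ℕ, (-(Real.pi : ℂ)) ^ n * z ^ (2 * n + 1) / (n.factorial * (2 * n + 1))

/-- The completed false theta function
`T̂(z;τ,ω) = Σ_{n∈ℤ} E(−i√(2πi(ω−τ))(n + Im z/(2 Im τ))) e^{2πinz} q^{n²}`,
with the principal branch of the square root. -/
def THat (z τ ω : ℂ) : ℂ :=
  ∑' n : ℤ, Ecplx (-I * (2 * Real.pi * I * (ω - τ)) ^ ((1 : ℂ) / 2) *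
      ((n : ℂ) + (z.im / (2 * τ.im) : ℝ))) *
    Complex.exp (2 * Real.pi * I * n * z) * Complex.exp (2 * Real.pi * I * τ * (n : ℂ) ^ 2)

/-- The completed false theta function
`ψ̂(z;τ,ω) = Σ_{n∈ℤ+1/2} E(−i√(πi(ω−τ))(n + Im z/Im τ)) e^{2πin(z+1/2)} q^{n²/2}`,
written with `n = k + 1/2`, `k ∈ ℤ`. -/
def psiHat (z τ ω : ℂ) : ℂ :=
  ∑' k : ℤ, Ecplx (-I * (Real.pi * I * (ω - τ)) ^ ((1 : ℂ) / 2) *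
      ((k : ℂ) + 1 / 2 + (z.im / τ.im : ℝ))) *
    Complex.exp (2 * Real.pi * I * ((k : ℂ) + 1 / 2) * (z + 1 / 2)) *
      Complex.exp (Real.pi * I * τ * ((k : ℂ) + 1 / 2) ^ 2)

theorem stmt15 (τ ω z : ℂ) (hτ : 0 < τ.im) (hω : 0 < ω.im) (m ℓ : ℤ) :
    THat (z + 2 * m * τ + ℓ) τ ω =
      Complex.exp (-2 * Real.pi * I * m * z) *
        Complex.exp (2 * Real.pi * I * τ) ^ (-(m ^ 2)) * THat z τ ω := by
  have hτ0 : τ.im ≠ 0 := ne_of_gt hτ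
  have him : (z + 2 * m * τ + ℓ).im = z.im + 2 * m * τ.im := by
    simp [Complex.add_im, Complex.mul_im, Complex.mul_re]
  have hq : Complex.exp (2 * Real.pi * I * τ) ^ (-(m ^ 2) : ℤ)
      = Complex.exp ((-(m ^ 2) : ℤ) * (2 * Real.pi * I * τ)) := by
    rw [Complex.exp_int_mul]
  rw [THat, THat, ← (Equiv.subRight (m : ℤ)).tsum_eq]
  rw [mul_assoc, hq, ← Complex.exp_add, ← tsum_mul_left]
  refine tsum_congr fun k => ?_
  have hk : ((Equiv.subRight m) k : ℤ) = k - m := rfl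
  rw [hk]
  have harg : ((((z + 2 * m * τ + ℓ).im) / (2 * τ.im) : ℝ) : ℂ)
      = (m : ℂ) + ((z.im / (2 * τ.im) : ℝ) : ℂ) := by
    have hr : (z + 2 * m * τ + ℓ).im / (2 * τ.im) = m + z.im / (2 * τ.im) := by
      rw [him]; field_simp; ring
    rw [hr]; push_cast; ring
  have hE : (((k - m : ℤ) : ℂ) + (((z + 2 * m * τ + ℓ).im / (2 * τ.im) : ℝ) : ℂ))
      = ((k : ℂ) + ((z.im / (2 * τ.im) : ℝ) : ℂ)) := by
    rw [harg]; push_cast; ring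
  have key : Complex.exp (2 * Real.pi * I * ((k - m : ℤ) : ℂ) * (z + 2 * m * τ + ℓ)) *
      Complex.exp (2 * Real.pi * I * τ * ((k - m : ℤ) : ℂ) ^ 2)
      = Complex.exp (-2 * Real.pi * I * m * z + (-(m ^ 2) : ℤ) * (2 * Real.pi * I * τ)) *
        (Complex.exp (2 * Real.pi * I * (k : ℂ) * z) *
          Complex.exp (2 * Real.pi * I * τ * (k : ℂ) ^ 2)) := by
    rw [← Complex.exp_add, ← Complex.exp_add, ← Complex.exp_add,
      Complex.exp_eq_exp_iff_exists_int]
    exact ⟨(k - m) * ℓ, by push_cast; ring⟩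
  push_cast at hE key ⊢
  rw [hE, mul_assoc, key]
  ring
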